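/- If f is a planar function on F_q with q odd (i.e., for every nonzero a, the map x ↦ f(x+a) - f(x) is a bijection), then pres(f) ≤ (q+1)/2. -/

import Mathlib

open Finset

variable {G : Type*}

/-- Number of distinct values of `g`. -/
def V [Fintype G] [DecidableEq G] (g : G → G) : ℕ := (univ.image g).card

/-- Permutation resemblance of `f`. -/
noncomputable def pres [Fintype G] [DecidableEq G] [AddGroup G] (f : G → G) : ℕ :=
  sInf {n | ∃ g : G → G, Function.Bijective (fun x => g x + f x) ∧ V g = n}

/-- Uniformity of `f`: the maximal number of preimages of a point. -/
def uf [Fintype G] [DecidableEq G] (f : G → G) : ℕ :=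
  univ.sup fun b => (univ.filter fun x => f x = b).card

/-- `M f r`: number of elements with exactly `r` preimages under `f`. -/
def M [Fintype G] [DecidableEq G] (f : G → G) (r : ℕ) : ℕ :=
  (univ.filter fun b => (univ.filter fun x => f x = b).card = r).card

/-- `N f s`: number of `s`-tuples of pairwise distinct elements on which `f` is constant. -/
noncomputable def N [Fintype G] (f : G → G) (s : ℕ) : ℕ :=
  Nat.card {t : Fin s → G // Function.Injective t ∧ ∀ i j, f (t i) = f (t j)}

lemma pres_le_aux [Fintype G] [DecidableEq G] [AddGroup G] (f : G → G) :
    pres f ≤ Fintype.card G - V f + 1 := by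
  classical
  set T : Finset G := univ.image f with hT
  let rep : G → G := fun b => if h : ∃ x, f x = b then h.choose else 0
  have hfrep : ∀ b ∈ T, f (rep b) = b := by
    intro b hb
    obtain ⟨x, -, rfl⟩ := mem_image.mp hb
    have h : ∃ y, f y = f x := ⟨x, rfl⟩
    simp only [rep, dif_pos h]
    exact h.choose_spec
  set S : Finset G := T.image rep with hS
  have hSc : S.card = T.card := by
    rw [hS]
    apply card_image_of_injOn
    intro a ha b hb hab
    rw [← hfrep a ha, ← hfrep b hb, hab]
  have hrepself : ∀ x ∈ S, rep (f x) = x := by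
    intro x hx
    obtain ⟨b, hb, rfl⟩ := mem_image.mp hx
    rw [hfrep b hb]
  have hcards : Fintype.card ↥(Sᶜ) = Fintype.card ↥(Tᶜ) := by
    simp [Fintype.card_coe, card_compl, hSc]
  let e : ↥(Sᶜ) ≃ ↥(Tᶜ) := Fintype.equivOfCardEq hcards
  let σ : G → G := fun x =>
    if hx : x ∈ S then f x else (e ⟨x, mem_compl.mpr hx⟩ : G)
  have hσinj : Function.Injective σ := by
    intro x y h
    simp only [σ] at h
    by_cases hx : x ∈ S <;> by_cases hy : y ∈ S
    · rw [dif_pos hx, dif_pos hy] at h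
      rw [← hrepself x hx, ← hrepself y hy, h]
    · rw [dif_pos hx, dif_neg hy] at h
      exfalso
      have h1 : f x ∈ T := mem_image_of_mem f (mem_univ x)
      have h2 : (e ⟨y, mem_compl.mpr hy⟩ : G) ∈ Tᶜ := (e ⟨y, mem_compl.mpr hy⟩).2
      rw [← h] at h2
      exact (mem_compl.mp h2) h1
    · rw [dif_neg hx, dif_pos hy] at h
      exfalso
      have h1 : f y ∈ T := mem_image_of_mem f (mem_univ y)
      have h2 : (e ⟨x, mem_compl.mpr hx⟩ : G) ∈ Tᶜ := (e ⟨x, mem_compl.mpr hx⟩).2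
      rw [h] at h2
      exact (mem_compl.mp h2) h1
    · rw [dif_neg hx, dif_neg hy] at h
      have := e.injective (Subtype.coe_injective h)
      simpa using this
  set g : G → G := fun x => σ x - f x with hg
  have hbij : Function.Bijective (fun x => g x + f x) := by
    have : (fun x => g x + f x) = σ := by
      funext x; simp [hg]
    rw [this]
    exact Finite.injective_iff_bijective.mp hσinj
  have hmem : V g ∈ {n | ∃ g' : G → G, Function.Bijective (fun x => g' x + f x) ∧ V g' = n} :=
    ⟨g, hbij, rfl⟩
  refine (Nat.sInf_le hmem).trans ?_
  have hsub : univ.image g ⊆ insert (0 : G) ((Sᶜ).image g) := by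
    intro y hy
    obtain ⟨x, -, rfl⟩ := mem_image.mp hy
    by_cases hx : x ∈ S
    · have : g x = 0 := by simp [hg, σ, dif_pos hx]
      rw [this]; exact mem_insert_self _ _
    · exact mem_insert_of_mem (mem_image_of_mem g (mem_compl.mpr hx))
  calc V g ≤ (insert (0 : G) ((Sᶜ).image g)).card := card_le_card hsub
    _ ≤ ((Sᶜ).image g).card + 1 := card_insert_le _ _
    _ ≤ (Sᶜ).card + 1 := Nat.add_le_add_right card_image_le 1
    _ = Fintype.card G - V f + 1 := by
        rw [card_compl, hSc]; rfl

theorem stmt_14 {F : Type*} [Field F] [Fintype F] [DecidableEq F]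
    (hq : Odd (Fintype.card F)) (f : F → F)
    (hplanar : ∀ a : F, a ≠ 0 → Function.Bijective (fun x => f (x + a) - f x)) :
    pres f ≤ (Fintype.card F + 1) / 2 := by
  classical
  set q := Fintype.card F with hqdef
  set r : F → ℕ := fun b => (univ.filter fun x => f x = b).card with hr
  set T : Finset F := univ.image f with hT
  -- sum of fiber sizes is q
  have hsum1 : ∑ b ∈ univ, r b = q := by
    rw [hqdef, ← Finset.card_univ]
    exact (card_eq_sum_card_fiberwise (fun x _ => mem_univ (f x))).symm
  -- the set of equal-value pairs
  set Q : Finset (F × F) := univ.filter (fun p => f p.1 = f p.2) with hQ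
  have hQsum : Q.card = ∑ b ∈ univ, (r b) ^ 2 := by
    rw [card_eq_sum_card_fiberwise (f := fun p : F × F => f p.1) (t := univ)
      (fun p _ => mem_univ _)]
    refine Finset.sum_congr rfl fun b _ => ?_
    have : Q.filter (fun p : F × F => f p.1 = b) =
        (univ.filter fun x => f x = b) ×ˢ (univ.filter fun x => f x = b) := by
      ext ⟨x, y⟩
      simp only [hQ, mem_filter, mem_product, mem_univ, true_and]
      constructor
      · rintro ⟨h1, h2⟩; exact ⟨h2, h1 ▸ h2⟩
      · rintro ⟨h1, h2⟩; exact ⟨h1.trans h2.symm, h1⟩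
    rw [this, card_product, hr, sq]
  -- diagonal and off-diagonal split
  have hsplit : (Q.filter (fun p : F × F => p.1 = p.2)).card +
      (Q.filter (fun p : F × F => ¬ p.1 = p.2)).card = Q.card :=
    card_filter_add_card_filter_not _
  have hdiag : (Q.filter (fun p : F × F => p.1 = p.2)).card = q := by
    have : Q.filter (fun p : F × F => p.1 = p.2) = univ.image (fun x : F => (x, x)) := by
      ext ⟨x, y⟩
      simp only [hQ, mem_filter, mem_univ, true_and, mem_image]
      constructor
      · rintro ⟨-, rfl⟩; exact ⟨x, rfl⟩
      · rintro ⟨z, hz⟩; cases hz; exact ⟨rfl, rfl⟩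
    rw [this, card_image_of_injective _ (fun a b h => (Prod.mk.injEq _ _ _ _ ▸ h).1),
      card_univ]
  -- off-diagonal count is q - 1 by planarity
  have hoff : (Q.filter (fun p : F × F => ¬ p.1 = p.2)).card = q - 1 := by
    set P := Q.filter (fun p : F × F => ¬ p.1 = p.2) with hP
    have hPmem : ∀ p ∈ P, p.2 - p.1 ∈ univ.filter (fun a : F => a ≠ 0) := by
      intro p hp
      simp only [hP, hQ, mem_filter, mem_univ, true_and] at hp ⊢
      exact sub_ne_zero.mpr (Ne.symm hp.2)
    rw [card_eq_sum_card_fiberwise hPmem]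
    have hone : ∀ a ∈ univ.filter (fun a : F => a ≠ 0),
        (P.filter fun p => p.2 - p.1 = a).card = 1 := by
      intro a ha
      have ha0 : a ≠ 0 := (mem_filter.mp ha).2
      obtain ⟨x0, hx0, hx0u⟩ := (hplanar a ha0).existsUnique 0
      rw [card_eq_one]
      refine ⟨(x0, x0 + a), ?_⟩
      ext ⟨x, y⟩
      simp only [hP, hQ, mem_filter, mem_univ, true_and, mem_singleton, Prod.mk.injEq]
      constructor
      · rintro ⟨⟨hfeq, hne⟩, hsub⟩
        have hy : y = x + a := by rw [← hsub]; ring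
        subst hy
        have : f (x + a) - f x = 0 := by rw [← hfeq]; ring
        have hx : x = x0 := hx0u x this
        subst hx; exact ⟨rfl, rfl⟩
      · rintro ⟨rfl, rfl⟩
        refine ⟨⟨?_, ?_⟩, by ring⟩
        · exact (sub_eq_zero.mp hx0).symm
        · intro h; exact ha0 (by linear_combination -h)
    rw [Finset.sum_congr rfl hone, Finset.sum_const, smul_eq_mul, mul_one,
      Finset.filter_ne', card_erase_of_mem (mem_univ 0), card_univ]
  have hsum2 : ∑ b ∈ univ, (r b) ^ 2 = 2 * q - 1 := by
    have hq1 : 1 ≤ q := Fintype.card_pos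
    omega
  -- restrict sums to the image
  have hzero : ∀ b ∈ univ, b ∉ T → r b = 0 := by
    intro b _ hb
    rw [hr]
    simp only [card_eq_zero, filter_eq_empty_iff, mem_univ, true_implies]
    intro x hx
    exact hb (hx ▸ mem_image_of_mem f (mem_univ x))
  have hsumT1 : ∑ b ∈ T, r b = q := by
    rw [← hsum1]
    exact Finset.sum_subset (subset_univ T) hzero
  have hsumT2 : ∑ b ∈ T, (r b) ^ 2 ≤ 2 * q - 1 := by
    rw [← hsum2]
    exact Finset.sum_le_sum_of_subset (subset_univ T)
  have hCS : q ^ 2 ≤ T.card * (2 * q - 1) := by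
    calc q ^ 2 = (∑ b ∈ T, r b) ^ 2 := by rw [hsumT1]
      _ ≤ T.card * ∑ b ∈ T, (r b) ^ 2 := sq_sum_le_card_mul_sum_sq
      _ ≤ T.card * (2 * q - 1) := by gcongr
  -- V f = T.card and V f ≥ (q+1)/2
  have hVf : V f = T.card := rfl
  obtain ⟨k, hk⟩ := hq
  have hq1 : 1 ≤ q := Fintype.card_pos
  have hVlb : q + 1 ≤ 2 * V f := by
    rw [hVf]
    by_contra hcon
    push_neg at hcon
    have hm : T.card ≤ k := by omega
    have h2 : 2 * q - 1 = 4 * k + 1 := by omega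
    have h4 : q ^ 2 ≤ k * (4 * k + 1) := by
      calc q ^ 2 ≤ T.card * (2 * q - 1) := hCS
        _ ≤ k * (2 * q - 1) := Nat.mul_le_mul_right _ hm
        _ = k * (4 * k + 1) := by rw [h2]
    rw [hk] at h4
    nlinarith [h4]
  have hVub : V f ≤ q := by
    rw [hVf, hqdef]
    exact card_le_univ T
  have h1 := pres_le_aux f
  rw [← hqdef] at h1
  omega
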